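/- Let n ≥ 1, let p be an integer with 1 ≤ p ≤ n, let A be an n×n real matrix, and let (D_p^k)_{k≥0} be the associated over-approximation sequence. Then for every k ≥ 0 and every x ∈ Zone(D_p^k), the vector A ⊗_p x belongs to Zone(D_p^{k+1}). -/

import Mathlib

/-- The maxmin-`p` value of `s : Fin n → ℝ`: the `p`-th smallest element (1-indexed) of the
multiset `{s 0, …, s (n-1)}`, counted with multiplicity. -/
noncomputable def maxmin {n : ℕ} (p : ℕ) (s : Fin n → ℝ) : ℝ :=
  (Multiset.sort (Multiset.map s (Finset.univ : Finset (Fin n)).val) (· ≤ ·)).getD (p - 1) 0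

/-- The maxmin-`p` matrix-vector product: `(A ⊗_p x)_i = ⊕_p (j ↦ A i j + x j)`. -/
noncomputable def mmProd {n : ℕ} (p : ℕ) (A : Fin n → Fin n → ℝ) (x : Fin n → ℝ) :
    Fin n → ℝ :=
  fun i => maxmin p (fun j => A i j + x j)
/-- `MinMaxValue(F | p, n+1−p)`: the minimum over all pairs `(S₁, S₂)` of subsets of
`{1,…,n}` with `|S₁| = p` and `|S₂| = n+1−p` of `max_{(i,j) ∈ S₁×S₂} F i j`, where the
entries lie in `ℝ ∪ {−∞}` (modeled as `WithBot ℝ`). -/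
noncomputable def minMaxValue {n : ℕ} (p : ℕ) (F : Fin n → Fin n → WithBot ℝ) : WithBot ℝ :=
  sInf {v : WithBot ℝ | ∃ S₁ S₂ : Finset (Fin n), S₁.card = p ∧ S₂.card = n + 1 - p ∧
    v = (S₁ ×ˢ S₂).sup (fun q => F q.1 q.2)}

/-- The over-approximation sequence `(D_p^k)_{k ≥ 0}` associated with `A`: `D_p^0` is the
max-plus identity matrix and
`D_p^{k+1}(i,j) = MinMaxValue((l,m) ↦ A i l − A j m + D_p^k l m | p, n+1−p)`. -/
noncomputable def Dseq {n : ℕ} (A : Fin n → Fin n → ℝ) (p : ℕ) :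
    ℕ → Fin n → Fin n → WithBot ℝ
  | 0 => fun i j => if i = j then 0 else ⊥
  | (k + 1) => fun i j =>
      minMaxValue p (fun l m => ((A i l - A j m : ℝ) : WithBot ℝ) + Dseq A p k l m)

/-- The zone of a DBM `D` over `ℝ ∪ {−∞}`: all real vectors `x` with
`x i − x j ≥ D i j` for all `i, j`. -/
def zone {n : ℕ} (D : Fin n → Fin n → WithBot ℝ) : Set (Fin n → ℝ) :=
  {x | ∀ i j, D i j ≤ ((x i - x j : ℝ) : WithBot ℝ)}

lemma maxmin_card_le {n p : ℕ} (hp1 : 1 ≤ p) (hpn : p ≤ n) (s : Fin n → ℝ) :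
    p ≤ (Finset.univ.filter (fun l => s l ≤ maxmin p s)).card := by
  classical
  set L := Multiset.sort (Multiset.map s (Finset.univ : Finset (Fin n)).val) (· ≤ ·) with hL
  have hlen : L.length = n := by
    simp [hL, Multiset.length_sort]
  have hp' : p - 1 < L.length := by omega
  have hv : maxmin p s = L.get ⟨p - 1, hp'⟩ := by
    rw [maxmin, ← hL, List.getD_eq_getElem L 0 hp']
    rfl
  have hs : L.Pairwise (· ≤ ·) := Multiset.pairwise_sort _ _
  -- every element of take p is ≤ v
  have htake : ∀ a ∈ L.take p, a ≤ maxmin p s := by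
    intro a ha
    rw [List.mem_iff_get] at ha
    obtain ⟨i, rfl⟩ := ha
    have h1 : (i : ℕ) < p := by
      have := i.isLt
      simp [List.length_take, hlen] at this
      omega
    rw [List.get_eq_getElem, List.getElem_take]
    rw [hv]
    exact hs.rel_get_of_le (by simp; omega)
  have hcount : p ≤ L.countP (fun a => decide (a ≤ maxmin p s)) := by
    have hsub : (L.take p).Sublist L := List.take_sublist p L
    have := hsub.countP_le (p := fun a => decide (a ≤ maxmin p s))
    have heq : (L.take p).countP (fun a => decide (a ≤ maxmin p s)) = (L.take p).length := by
      rw [List.countP_eq_length]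
      intro a ha
      simpa using htake a ha
    rw [heq, List.length_take, hlen, min_eq_left hpn] at this
    exact this
  calc p ≤ L.countP (fun a => decide (a ≤ maxmin p s)) := hcount
    _ = Multiset.countP (fun a => a ≤ maxmin p s) (L : Multiset ℝ) :=
        (Multiset.coe_countP _ _).symm
    _ = Multiset.countP (fun a => a ≤ maxmin p s)
          (Multiset.map s (Finset.univ : Finset (Fin n)).val) := by rw [hL, Multiset.sort_eq]
    _ = (Finset.univ.filter (fun l => s l ≤ maxmin p s)).card := by
        rw [Multiset.countP_map]; rfl

lemma maxmin_card_ge {n p : ℕ} (hp1 : 1 ≤ p) (hpn : p ≤ n) (s : Fin n → ℝ) :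
    n + 1 - p ≤ (Finset.univ.filter (fun l => maxmin p s ≤ s l)).card := by
  classical
  set L := Multiset.sort (Multiset.map s (Finset.univ : Finset (Fin n)).val) (· ≤ ·) with hL
  have hlen : L.length = n := by
    simp [hL, Multiset.length_sort]
  have hp' : p - 1 < L.length := by omega
  have hv : maxmin p s = L.get ⟨p - 1, hp'⟩ := by
    rw [maxmin, ← hL, List.getD_eq_getElem L 0 hp']
    rfl
  have hs : L.Pairwise (· ≤ ·) := Multiset.pairwise_sort _ _
  have hdrop : ∀ a ∈ L.drop (p-1), maxmin p s ≤ a := by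
    intro a ha
    rw [List.mem_iff_get] at ha
    obtain ⟨i, rfl⟩ := ha
    rw [List.get_eq_getElem, List.getElem_drop]
    rw [hv]
    exact hs.rel_get_of_le (by simp)
  have hcount : n + 1 - p ≤ L.countP (fun a => decide (maxmin p s ≤ a)) := by
    have hsub : (L.drop (p-1)).Sublist L := List.drop_sublist _ L
    have := hsub.countP_le (p := fun a => decide (maxmin p s ≤ a))
    have heq : (L.drop (p-1)).countP (fun a => decide (maxmin p s ≤ a))
        = (L.drop (p-1)).length := by
      rw [List.countP_eq_length]
      intro a ha
      simpa using hdrop a ha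
    rw [heq, List.length_drop, hlen] at this
    omega
  calc n + 1 - p ≤ L.countP (fun a => decide (maxmin p s ≤ a)) := hcount
    _ = Multiset.countP (fun a => maxmin p s ≤ a) (L : Multiset ℝ) :=
        (Multiset.coe_countP _ _).symm
    _ = Multiset.countP (fun a => maxmin p s ≤ a)
          (Multiset.map s (Finset.univ : Finset (Fin n)).val) := by rw [hL, Multiset.sort_eq]
    _ = (Finset.univ.filter (fun l => maxmin p s ≤ s l)).card := by
        rw [Multiset.countP_map]; rfl

theorem image_subset_next_zone (n p : ℕ) (hn : 1 ≤ n) (hp1 : 1 ≤ p) (hpn : p ≤ n)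
    (A : Fin n → Fin n → ℝ) (k : ℕ) (x : Fin n → ℝ)
    (hx : x ∈ zone (Dseq A p k)) :
    mmProd p A x ∈ zone (Dseq A p (k + 1)) := by
  classical
  intro i j
  obtain ⟨S₁, hS₁sub, hS₁card⟩ := Finset.exists_subset_card_eq (n := p)
    (maxmin_card_le hp1 hpn (fun l => A i l + x l))
  obtain ⟨S₂, hS₂sub, hS₂card⟩ := Finset.exists_subset_card_eq (n := n + 1 - p)
    (maxmin_card_ge hp1 hpn (fun m => A j m + x m))
  have hbound : (S₁ ×ˢ S₂).sup
      (fun q => ((A i q.1 - A j q.2 : ℝ) : WithBot ℝ) + Dseq A p k q.1 q.2)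
      ≤ ((mmProd p A x i - mmProd p A x j : ℝ) : WithBot ℝ) := by
    apply Finset.sup_le
    rintro ⟨l, m⟩ hq
    rw [Finset.mem_product] at hq
    have hl : A i l + x l ≤ maxmin p (fun l => A i l + x l) :=
      (Finset.mem_filter.mp (hS₁sub hq.1)).2
    have hm : maxmin p (fun m => A j m + x m) ≤ A j m + x m :=
      (Finset.mem_filter.mp (hS₂sub hq.2)).2
    calc ((A i l - A j m : ℝ) : WithBot ℝ) + Dseq A p k l m
        ≤ ((A i l - A j m : ℝ) : WithBot ℝ) + ((x l - x m : ℝ) : WithBot ℝ) :=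
          add_le_add_right (hx l m) _
      _ = ((A i l - A j m + (x l - x m) : ℝ) : WithBot ℝ) := by
          rw [← WithBot.coe_add]
      _ ≤ ((mmProd p A x i - mmProd p A x j : ℝ) : WithBot ℝ) := by
          rw [WithBot.coe_le_coe]
          simp only [mmProd]
          linarith
  simp only [Dseq, minMaxValue]
  refine le_trans (csInf_le (OrderBot.bddBelow _) ?_) hbound
  exact ⟨S₁, S₂, hS₁card, hS₂card, rfl⟩
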